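/- Let m ≥ 1 be an integer, ρ ∈ (0,1), let η ∈ C_c^∞(ℝ²) satisfy supp η ⊂ {|z'| < 1} and ∫_{ℝ²} η² dz' = 1, let ω' = (ω₁, ω₂) ∈ ℝ² be a unit vector, and let a = (a₁, a₂, a₃) ∈ ℂ³. Let λ, μ be real-valued C^m functions on { y ∈ ℝ³ : |y| ≤ δ, y₃ ≥ 0 } for some δ > 0, and set λ^m(y', y₃) := Σ_{n=0}^{m−1} (∂₃^n λ(y', 0)/n!) y₃^n and similarly μ^m. Define the complex numbers D := ( i(ω₁a₁ + ω₂a₂) − a₃ )² and B := Σ_{i,j=1}^{2} ( (a_i ω_j + a_j ω_i)/2 )² + 2 Σ_{i=1}^{2} ( (i a₃ ω_i − a_i)/2 )² + a₃² (squares of complex numbers, not moduli). Then lim_{N→∞} N^{m+3−2ρ} ∫₀^{1/(2√N)} ∫_{ℝ²} η(N^{1−ρ} y')² e^{−2N y₃} [ (λ − λ^m)(y) D + 2 (μ − μ^m)(y) B ] dy' dy₃ = (1/2^{m+1}) ∂₃^m λ(0) · D + (1/2^m) ∂₃^m μ(0) · B. -/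

import Mathlib

open MeasureTheory

noncomputable section

/-- Partial derivative in the `y₃` variable within a set `B`, for real valued `f`. -/
def d3BR (B : Set (Fin 3 → ℝ)) (f : (Fin 3 → ℝ) → ℝ) : (Fin 3 → ℝ) → ℝ :=
  fun y => fderivWithin ℝ f B y (Pi.single 2 1)

/-- The truncated normal Taylor expansion
`f^m(y', y₃) = Σ_{n<m} (∂₃ⁿ f(y',0)/n!) y₃ⁿ`. -/
def fkBR (B : Set (Fin 3 → ℝ)) (m : ℕ) (f : (Fin 3 → ℝ) → ℝ) (y : Fin 3 → ℝ) : ℝ :=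
  ∑ n ∈ Finset.range m,
    ((d3BR B)^[n] f ![y 0, y 1, 0] / (Nat.factorial n : ℝ)) * (y 2) ^ n

end

open Set Filter

noncomputable section AuxProofs

lemma uniqueDiffOn_halfBall {δ : ℝ} (hδ : 0 < δ) :
    UniqueDiffOn ℝ {y : Fin 3 → ℝ | ‖y‖ ≤ δ ∧ 0 ≤ y 2} := by
  have hconv : Convex ℝ {y : Fin 3 → ℝ | ‖y‖ ≤ δ ∧ 0 ≤ y 2} := by
    have h1 : Convex ℝ {y : Fin 3 → ℝ | ‖y‖ ≤ δ} := by
      have : {y : Fin 3 → ℝ | ‖y‖ ≤ δ} = Metric.closedBall 0 δ := by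
        ext y; simp [Metric.mem_closedBall, dist_zero_right]
      rw [this]; exact convex_closedBall _ _
    have h2 : Convex ℝ {y : Fin 3 → ℝ | 0 ≤ y 2} :=
      convex_halfSpace_ge (LinearMap.isLinear (LinearMap.proj 2 : (Fin 3 → ℝ) →ₗ[ℝ] ℝ)) 0
    exact h1.inter h2
  refine uniqueDiffOn_convex hconv ?_
  refine ⟨![0,0,δ/2], ?_⟩
  have hopen : IsOpen {y : Fin 3 → ℝ | ‖y‖ < δ ∧ 0 < y 2} :=
    IsOpen.inter (isOpen_lt continuous_norm continuous_const)
      (isOpen_lt continuous_const (continuous_apply 2))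
  refine interior_maximal ?_ hopen ?_
  · intro y hy; exact ⟨hy.1.le, hy.2.le⟩
  · constructor
    · have : ‖(![0,0,δ/2] : Fin 3 → ℝ)‖ ≤ δ/2 := by
        refine (pi_norm_le_iff_of_nonneg (by positivity)).2 ?_
        intro i; fin_cases i <;> simp [abs_of_nonneg hδ.le, hδ.le] <;> linarith
      linarith
    · show (0:ℝ) < δ/2; linarith

lemma contDiffOn_d3_iter {B : Set (Fin 3 → ℝ)}
    (hB : UniqueDiffOn ℝ B) {m : ℕ} {f : (Fin 3 → ℝ) → ℝ}
    (hf : ContDiffOn ℝ m f B) :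
    ∀ n, n ≤ m → ContDiffOn ℝ (↑(m - n)) ((d3BR B)^[n] f) B := by
  intro n
  induction n with
  | zero => intro _; simpa using hf
  | succ k ih =>
    intro hk
    have hk' : k ≤ m := Nat.le_of_succ_le hk
    have h1 : ContDiffOn ℝ (↑(m - k)) ((d3BR B)^[k] f) B := ih hk'
    rw [Function.iterate_succ_apply']
    show ContDiffOn ℝ (↑(m - (k+1))) (d3BR B ((d3BR B)^[k] f)) B
    have h2 : ContDiffOn ℝ (↑(m - (k+1))) (fderivWithin ℝ ((d3BR B)^[k] f) B) B := by
      apply h1.fderivWithin hB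
      have : m - k = (m - (k+1)) + 1 := by omega
      rw [this]; push_cast; exact le_refl _
    exact (h2.clm_apply contDiffOn_const : ContDiffOn ℝ (↑(m - (k+1)))
      (fun y => fderivWithin ℝ ((d3BR B)^[k] f) B y (Pi.single 2 1)) B)

lemma gamma_hasDeriv (z : Fin 2 → ℝ) (s : ℝ) (S : Set ℝ) :
    HasDerivWithinAt (fun s : ℝ => (![z 0, z 1, s] : Fin 3 → ℝ)) (Pi.single 2 1) S s := by
  have h : (fun s : ℝ => (![z 0, z 1, s] : Fin 3 → ℝ))
      = fun s : ℝ => (![z 0, z 1, 0] : Fin 3 → ℝ) + s • (Pi.single 2 1 : Fin 3 → ℝ) := by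
    funext s i
    fin_cases i <;> simp [Pi.single_apply]
  rw [h]
  simpa using ((hasDerivWithinAt_id s S).smul_const (Pi.single 2 1 : Fin 3 → ℝ)).const_add
    (![z 0, z 1, 0] : Fin 3 → ℝ)

lemma chain_iter {B : Set (Fin 3 → ℝ)} (hB : UniqueDiffOn ℝ B)
    {m : ℕ} {f : (Fin 3 → ℝ) → ℝ} (hf : ContDiffOn ℝ m f B)
    (hd3 : ∀ n, n ≤ m → ContDiffOn ℝ (↑(m - n)) ((d3BR B)^[n] f) B)
    (z : Fin 2 → ℝ) {T : ℝ} (hT : 0 < T)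
    (hmaps : ∀ s ∈ Icc (0:ℝ) T, (![z 0, z 1, s] : Fin 3 → ℝ) ∈ B) :
    ∀ n, n ≤ m → ∀ s ∈ Icc (0:ℝ) T,
      iteratedDerivWithin n (fun s => f ![z 0, z 1, s]) (Icc 0 T) s
        = (d3BR B)^[n] f ![z 0, z 1, s] := by
  intro n
  induction n with
  | zero => intro _ s _; simp
  | succ k ih =>
    intro hk s hs
    have hk' : k ≤ m := Nat.le_of_succ_le hk
    rw [iteratedDerivWithin_succ]
    have hcong : derivWithin (iteratedDerivWithin k (fun s => f ![z 0, z 1, s]) (Icc 0 T))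
        (Icc 0 T) s
        = derivWithin (fun s => (d3BR B)^[k] f ![z 0, z 1, s]) (Icc 0 T) s := by
      apply derivWithin_congr
      · intro y hy; exact ih hk' y hy
      · exact ih hk' s hs
    rw [hcong]
    -- now compute the derivWithin of the composition
    have hdiff : DifferentiableOn ℝ ((d3BR B)^[k] f) B := by
      have h1 := hd3 k hk'
      refine h1.differentiableOn ?_
      have h2 : 1 ≤ m - k := by omega
      exact_mod_cast (show m - k ≠ 0 by omega)
    have hFD : HasFDerivWithinAt ((d3BR B)^[k] f)
        (fderivWithin ℝ ((d3BR B)^[k] f) B ![z 0, z 1, s]) B ![z 0, z 1, s] :=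
      (hdiff _ (hmaps s hs)).hasFDerivWithinAt
    have hcomp : HasDerivWithinAt (fun s => (d3BR B)^[k] f ![z 0, z 1, s])
        (fderivWithin ℝ ((d3BR B)^[k] f) B ![z 0, z 1, s] (Pi.single 2 1)) (Icc 0 T) s := by
      exact hFD.comp_hasDerivWithinAt s (gamma_hasDeriv z s _) (fun y hy => hmaps y hy)
    rw [hcomp.derivWithin (uniqueDiffOn_Icc hT s hs)]
    rw [Function.iterate_succ_apply']
    rfl

lemma zeroB : (0 : Fin 3 → ℝ) = ![0,0,0] := by
  funext i; fin_cases i <;> simp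

lemma gamma_contDiff (z : Fin 2 → ℝ) :
    ContDiff ℝ (⊤:ℕ∞) (fun s : ℝ => (![z 0, z 1, s] : Fin 3 → ℝ)) := by
  have h : (fun s : ℝ => (![z 0, z 1, s] : Fin 3 → ℝ))
      = fun s : ℝ => (![z 0, z 1, 0] : Fin 3 → ℝ) + s • (Pi.single 2 1 : Fin 3 → ℝ) := by
    funext s i; fin_cases i <;> simp [Pi.single_apply]
  rw [h]
  exact contDiff_const.add (contDiff_id.smul contDiff_const)

lemma remainder_bound {δ : ℝ} (hδ : 0 < δ) {B : Set (Fin 3 → ℝ)}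
    (hB : B = {y : Fin 3 → ℝ | ‖y‖ ≤ δ ∧ 0 ≤ y 2})
    {m : ℕ} (hm : 1 ≤ m) {f : (Fin 3 → ℝ) → ℝ} (hf : ContDiffOn ℝ m f B)
    (hBu : UniqueDiffOn ℝ B)
    {ε : ℝ} (hε : 0 < ε) :
    ∃ r, 0 < r ∧ r ≤ δ ∧ ∀ z : Fin 2 → ℝ, ∀ t : ℝ, 0 ≤ t →
      ‖(![z 0, z 1, t] : Fin 3 → ℝ)‖ ≤ r →
      |f ![z 0, z 1, t] - fkBR B m f ![z 0, z 1, t]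
        - (d3BR B)^[m] f 0 * t ^ m / (m.factorial : ℝ)| ≤ ε * t ^ m := by
  have hd3 := contDiffOn_d3_iter hBu hf
  set g := (d3BR B)^[m] f with hg
  have hgc : ContinuousOn g B := by
    have := hd3 m le_rfl
    simpa using this.continuousOn
  have h0B : (0 : Fin 3 → ℝ) ∈ B := by
    rw [hB]; constructor
    · simp [hδ.le]
    · simp
  have hcw : ContinuousWithinAt g B 0 := hgc 0 h0B
  rw [Metric.continuousWithinAt_iff] at hcw
  obtain ⟨r₀, hr₀, hr₀'⟩ := hcw (ε * m.factorial) (by positivity)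
  refine ⟨min (r₀/2) δ, by positivity, min_le_right _ _, ?_⟩
  intro z t ht hnorm
  have hrδ : min (r₀/2) δ ≤ δ := min_le_right _ _
  rcases eq_or_lt_of_le ht with h0 | htpos
  · -- t = 0 case
    subst h0
    have h1 : fkBR B m f ![z 0, z 1, 0] = f ![z 0, z 1, 0] := by
      rw [fkBR]
      rw [Finset.sum_eq_single 0]
      · simp
      · intro n hn hn0
        simp [zero_pow hn0]
      · intro h; exact absurd (Finset.mem_range.2 (by omega)) h
    rw [h1]
    simp [zero_pow (by omega : m ≠ 0)]
  · -- t > 0 case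
    have hmem : ∀ s ∈ Icc (0:ℝ) t, (![z 0, z 1, s] : Fin 3 → ℝ) ∈ B := by
      intro s hs
      have hle : ‖(![z 0, z 1, s] : Fin 3 → ℝ)‖ ≤ ‖(![z 0, z 1, t] : Fin 3 → ℝ)‖ := by
        refine (pi_norm_le_iff_of_nonneg (norm_nonneg _)).2 ?_
        intro i
        fin_cases i
        · simpa using norm_le_pi_norm (![z 0, z 1, t] : Fin 3 → ℝ) 0
        · simpa using norm_le_pi_norm (![z 0, z 1, t] : Fin 3 → ℝ) 1
        · have h2 : |s| ≤ |t| := by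
            rw [abs_of_nonneg hs.1, abs_of_nonneg ht]; exact hs.2
          have h3 : |t| ≤ ‖(![z 0, z 1, t] : Fin 3 → ℝ)‖ := by
            simpa using norm_le_pi_norm (![z 0, z 1, t] : Fin 3 → ℝ) 2
          simpa using h2.trans h3
      rw [hB]
      constructor
      · exact hle.trans (hnorm.trans hrδ)
      · simpa using hs.1
    set F := fun s : ℝ => f ![z 0, z 1, s] with hF
    have hchain := chain_iter hBu hf hd3 z htpos hmem
    have hFc : ContDiffOn ℝ (m-1 : ℕ) F (Icc 0 t) := by
      have : ContDiffOn ℝ m F (Icc 0 t) := by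
        exact hf.comp ((gamma_contDiff z).of_le (by exact_mod_cast (le_top : (m:ℕ∞) ≤ ⊤))).contDiffOn (fun s hs => hmem s hs)
      exact this.of_le (by exact_mod_cast Nat.sub_le m 1)
    have hF' : DifferentiableOn ℝ (iteratedDerivWithin (m-1) F (Icc 0 t)) (Ioo 0 t) := by
      have hdiffB : DifferentiableOn ℝ ((d3BR B)^[m-1] f) B := by
        refine (hd3 (m-1) (Nat.sub_le m 1)).differentiableOn ?_
        have h2 : 1 ≤ m - (m-1) := by omega
        exact_mod_cast (show m - (m-1) ≠ 0 by omega)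
      have hcompdiff : DifferentiableOn ℝ (fun s => (d3BR B)^[m-1] f ![z 0, z 1, s]) (Icc 0 t) := by
        intro s hs
        exact ((hdiffB _ (hmem s hs)).hasFDerivWithinAt.comp_hasDerivWithinAt s
          (gamma_hasDeriv z s _) (fun y hy => hmem y hy)).differentiableWithinAt
      refine (DifferentiableOn.congr (hcompdiff.mono Ioo_subset_Icc_self) ?_)
      intro s hs
      exact hchain (m-1) (Nat.sub_le m 1) s (Ioo_subset_Icc_self hs)
    obtain ⟨x', hx', heq⟩ := taylor_mean_remainder_lagrange htpos.ne
      (by rwa [uIcc_of_le htpos.le]) (by rwa [uIcc_of_le htpos.le, uIoo_of_le htpos.le])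
    rw [uIoo_of_le htpos.le] at hx'
    rw [uIcc_of_le htpos.le] at heq
    have hm1 : m - 1 + 1 = m := by omega
    rw [hm1] at heq
    have htay : taylorWithinEval F (m-1) (Icc 0 t) 0 t = fkBR B m f ![z 0, z 1, t] := by
      rw [taylor_within_apply, fkBR]
      rw [hm1]
      apply Finset.sum_congr rfl
      intro k hk
      have hkm : k ≤ m := by have := Finset.mem_range.1 hk; omega
      rw [hchain k hkm 0 (left_mem_Icc.2 htpos.le)]
      have h0 : (![z 0, z 1, t] : Fin 3 → ℝ) 0 = z 0 := by simp
      have h1 : (![z 0, z 1, t] : Fin 3 → ℝ) 1 = z 1 := by simp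
      have h2 : (![z 0, z 1, t] : Fin 3 → ℝ) 2 = t := by simp
      rw [h0, h1, h2]
      simp [smul_eq_mul]
      ring
    have hiter : iteratedDerivWithin m F (Icc 0 t) x' = g ![z 0, z 1, x'] :=
      hchain m le_rfl x' (Ioo_subset_Icc_self hx')
    have hFt : F t = f ![z 0, z 1, t] := rfl
    rw [htay, hiter] at heq
    rw [hFt, sub_zero] at heq
    rw [heq]
    have hgx : |g ![z 0, z 1, x'] - g 0| ≤ ε * m.factorial := by
      have hxB : (![z 0, z 1, x'] : Fin 3 → ℝ) ∈ B := hmem x' (Ioo_subset_Icc_self hx')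
      have hdist : dist (![z 0, z 1, x'] : Fin 3 → ℝ) 0 < r₀ := by
        rw [dist_zero_right]
        have hle : ‖(![z 0, z 1, x'] : Fin 3 → ℝ)‖ ≤ ‖(![z 0, z 1, t] : Fin 3 → ℝ)‖ := by
          refine (pi_norm_le_iff_of_nonneg (norm_nonneg _)).2 ?_
          intro i
          fin_cases i
          · simpa using norm_le_pi_norm (![z 0, z 1, t] : Fin 3 → ℝ) 0
          · simpa using norm_le_pi_norm (![z 0, z 1, t] : Fin 3 → ℝ) 1
          · have h2 : |x'| ≤ |t| := by
              rw [abs_of_nonneg hx'.1.le, abs_of_nonneg ht]; exact hx'.2.le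
            have h3 : |t| ≤ ‖(![z 0, z 1, t] : Fin 3 → ℝ)‖ := by
              simpa using norm_le_pi_norm (![z 0, z 1, t] : Fin 3 → ℝ) 2
            simpa using h2.trans h3
        calc ‖(![z 0, z 1, x'] : Fin 3 → ℝ)‖ ≤ min (r₀/2) δ := hle.trans hnorm
        _ ≤ r₀/2 := min_le_left _ _
        _ < r₀ := by linarith
      have := hr₀' hxB hdist
      rw [Real.dist_eq] at this
      exact this.le
    have hfac : (0:ℝ) < m.factorial := by exact_mod_cast m.factorial_pos
    have hrw : g ![z 0, z 1, x'] * t ^ m / m.factorial - g 0 * t ^ m / m.factorial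
        = (g ![z 0, z 1, x'] - g 0) * t ^ m / m.factorial := by ring
    calc |g ![z 0, z 1, x'] * t ^ m / m.factorial - g 0 * t ^ m / m.factorial|
        = |g ![z 0, z 1, x'] - g 0| * t ^ m / m.factorial := by
          rw [hrw, abs_div, abs_mul]
          rw [abs_of_nonneg (pow_nonneg ht m), abs_of_nonneg hfac.le]
      _ ≤ (ε * m.factorial) * t ^ m / m.factorial := by gcongr
      _ = ε * t ^ m := by field_simp

lemma eta_scale (η : (Fin 2 → ℝ) → ℝ) {c : ℝ} (hc : 0 ≤ c) :
    ∫ z : Fin 2 → ℝ, (η (fun i => c * z i))^2 = (c ^ 2)⁻¹ * ∫ z : Fin 2 → ℝ, (η z)^2 := by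
  have h : ∀ z : Fin 2 → ℝ, (fun i => c * z i) = c • z := by intro z; rfl
  simp_rw [h]
  have := MeasureTheory.Measure.integral_comp_smul_of_nonneg
    (μ := (volume : Measure (Fin 2 → ℝ))) (fun z => (η z)^2) c (hR := hc)
  simpa [Module.finrank_fintype_fun_eq_card, smul_eq_mul] using this

lemma integrableOn_pow_exp (m : ℕ) :
    IntegrableOn (fun s : ℝ => s ^ m * Real.exp (-s)) (Ioi 0) := by
  have h := Real.GammaIntegral_convergent (s := (m+1 : ℝ)) (by positivity)
  refine h.congr_fun ?_ measurableSet_Ioi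
  intro s hs
  simp only [show ((m:ℝ)+1) - 1 = (m:ℝ) by ring, Real.rpow_natCast]
  ring

lemma integral_pow_exp (m : ℕ) :
    ∫ s in Ioi (0:ℝ), s ^ m * Real.exp (-s) = m.factorial := by
  have h := Real.integral_rpow_mul_exp_neg_mul_Ioi (a := (m+1:ℝ)) (r := 1) (by positivity)
    one_pos
  rw [show ((m:ℝ)+1) - 1 = (m:ℝ) by ring] at h
  have h2 : ∫ s in Ioi (0:ℝ), s ^ m * Real.exp (-s)
      = ∫ s in Ioi (0:ℝ), s ^ (m:ℝ) * Real.exp (-(1*s)) := by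
    refine setIntegral_congr_fun measurableSet_Ioi ?_
    intro s hs
    simp only [Real.rpow_natCast]; ring
  rw [h2, h]
  have h3 : Real.Gamma ((m:ℝ)+1) = m.factorial := Real.Gamma_nat_eq_factorial m
  rw [h3]
  norm_num

lemma sub_integral (m : ℕ) {c b : ℝ} (hc : 0 < c) (hb : 0 ≤ b) :
    ∫ t in Ioc (0:ℝ) b, t ^ m * Real.exp (-(c*t))
      = c⁻¹^(m+1) * ∫ s in (0:ℝ)..(c*b), s ^ m * Real.exp (-s) := by
  rw [← intervalIntegral.integral_of_le hb]
  have h := intervalIntegral.integral_comp_mul_left (a := (0:ℝ)) (b := b)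
      (fun s => s ^ m * Real.exp (-s)) (c := c) hc.ne'
  have h2 : (fun t => t ^ m * Real.exp (-(c*t)))
      = fun t => c⁻¹^m * ((c*t) ^ m * Real.exp (-(c*t))) := by
    funext t
    have hcc : c⁻¹^m * c^m = 1 := by rw [← mul_pow, inv_mul_cancel₀ hc.ne', one_pow]
    rw [mul_pow]
    calc t ^ m * Real.exp (-(c*t)) = (c⁻¹^m * c^m) * (t^m * Real.exp (-(c*t))) := by
          rw [hcc, one_mul]
      _ = c⁻¹ ^ m * (c ^ m * t ^ m * Real.exp (-(c * t))) := by ring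
  rw [h2]
  rw [intervalIntegral.integral_const_mul]
  rw [h]
  simp only [mul_zero, smul_eq_mul]
  rw [pow_succ]
  ring

lemma sqrt_tendsto : Tendsto (fun N : ℕ => Real.sqrt N) atTop atTop := by
  have h : Tendsto (fun N : ℕ => ((N:ℝ)) ^ ((1:ℝ)/2)) atTop atTop :=
    (tendsto_rpow_atTop (by norm_num)).comp tendsto_natCast_atTop_atTop
  refine h.congr fun N => ?_
  rw [Real.sqrt_eq_rpow]


lemma main_time_limit (m : ℕ) :
    Tendsto (fun N : ℕ => (N:ℝ)^(m+1) *
        ∫ t in Ioc (0:ℝ) (1/(2*Real.sqrt N)), t^m * Real.exp (-2*N*t))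
      atTop (nhds ((m.factorial : ℝ) / 2^(m+1))) := by
  have hmain : Tendsto (fun N : ℕ => ((2:ℝ)^(m+1))⁻¹ * ∫ s in (0:ℝ)..(Real.sqrt N),
      s ^ m * Real.exp (-s)) atTop (nhds ((m.factorial : ℝ) / 2^(m+1))) := by
    have h1 := MeasureTheory.intervalIntegral_tendsto_integral_Ioi (μ := volume) 0
      (integrableOn_pow_exp m) sqrt_tendsto
    rw [integral_pow_exp] at h1
    have := h1.const_mul (((2:ℝ)^(m+1))⁻¹)
    simpa [inv_mul_eq_div] using this
  refine Tendsto.congr' ?_ hmain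
  filter_upwards [eventually_ge_atTop 1] with N hN
  have hN0 : (0:ℝ) < N := by exact_mod_cast hN
  have hsq : (0:ℝ) < Real.sqrt N := Real.sqrt_pos.2 hN0
  have hc : (0:ℝ) < 2 * N := by linarith
  have hb : (0:ℝ) ≤ 1/(2*Real.sqrt N) := by positivity
  have hcb : (2*(N:ℝ)) * (1/(2*Real.sqrt N)) = Real.sqrt N := by
    rw [mul_one_div, div_eq_iff (by positivity : (2:ℝ)*Real.sqrt N ≠ 0)]
    nlinarith [Real.mul_self_sqrt hN0.le]
  have hexp : (fun t : ℝ => t^m * Real.exp (-2*N*t))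
      = fun t => t^m * Real.exp (-((2*N)*t)) := by funext t; ring_nf
  rw [hexp, sub_integral m hc hb, hcb]
  have hNne : ((N:ℝ)) ≠ 0 := hN0.ne'
  field_simp
  have key : (2:ℝ)^(m+1) * (N:ℝ)^(m+1) * (1/(2*(N:ℝ)))^(m+1) = 1 := by
    rw [← mul_pow, ← mul_pow, mul_one_div_cancel hc.ne', one_pow]
  linear_combination -(∫ s in (0:ℝ)..(Real.sqrt N), s ^ m * Real.exp (-s)) * key

-- norm facts
lemma norm3_le {a b t r : ℝ} (hr : 0 ≤ r) (ha : |a| ≤ r) (hb : |b| ≤ r) (ht : |t| ≤ r) :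
    ‖(![a, b, t] : Fin 3 → ℝ)‖ ≤ r := by
  refine (pi_norm_le_iff_of_nonneg hr).2 ?_
  intro i; fin_cases i <;> simpa

lemma eta_zero_of_norm_ge (η : (Fin 2 → ℝ) → ℝ)
    (hηsupp : tsupport η ⊆ Metric.ball (0 : Fin 2 → ℝ) 1)
    {c : ℝ} (hc : 0 < c) {z : Fin 2 → ℝ} (hz : c⁻¹ ≤ ‖z‖) :
    η (fun i => c * z i) = 0 := by
  by_contra h
  have hmem : (fun i => c * z i) ∈ tsupport η := subset_tsupport η h
  have hball := hηsupp hmem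
  rw [Metric.mem_ball, dist_zero_right] at hball
  have heq : (fun i => c * z i) = c • z := rfl
  rw [heq, norm_smul, Real.norm_eq_abs, abs_of_pos hc] at hball
  have : ‖z‖ < c⁻¹ := by
    rw [inv_eq_one_div, lt_div_iff₀ hc]
    linarith [hball]
  linarith

-- continuity of f - fk on B
lemma g_contOn {δ : ℝ} (hδ : 0 < δ) {B : Set (Fin 3 → ℝ)}
    (hB : B = {y : Fin 3 → ℝ | ‖y‖ ≤ δ ∧ 0 ≤ y 2})
    {m : ℕ} {f : (Fin 3 → ℝ) → ℝ} (hf : ContDiffOn ℝ m f B) (hBu : UniqueDiffOn ℝ B) :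
    ContinuousOn (fun y => f y - fkBR B m f y) B := by
  have hπ : Continuous (fun y : Fin 3 → ℝ => (![y 0, y 1, 0] : Fin 3 → ℝ)) := by
    refine continuous_pi ?_
    intro i; fin_cases i
    · simpa using continuous_apply 0
    · simpa using continuous_apply 1
    · simpa using continuous_const
  have hπmaps : MapsTo (fun y : Fin 3 → ℝ => (![y 0, y 1, 0] : Fin 3 → ℝ)) B B := by
    intro y hy
    rw [hB] at hy ⊢
    refine ⟨?_, by simp⟩
    refine norm3_le (le_trans (norm_nonneg y) hy.1) ?_ ?_ (by simpa using hδ.le)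
    · exact le_trans (by simpa using norm_le_pi_norm y 0) hy.1
    · exact le_trans (by simpa using norm_le_pi_norm y 1) hy.1
  refine (hf.continuousOn).sub ?_
  unfold fkBR
  refine continuousOn_finset_sum _ ?_
  intro n hn
  have hd : ContinuousOn ((d3BR B)^[n] f) B := by
    have := contDiffOn_d3_iter hBu hf n (by
      have := Finset.mem_range.1 hn; omega)
    exact this.continuousOn
  refine ContinuousOn.mul ?_ ((continuous_apply 2).pow n).continuousOn
  refine ContinuousOn.div_const ?_ _
  exact hd.comp hπ.continuousOn hπmaps

-- membership of the tube in B
lemma tube_mem {δ : ℝ} (hδ : 0 < δ) {B : Set (Fin 3 → ℝ)}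
    (hB : B = {y : Fin 3 → ℝ | ‖y‖ ≤ δ ∧ 0 ≤ y 2})
    {r T : ℝ} (hr : r ≤ δ) (hT : T ≤ δ) {z : Fin 2 → ℝ} {t : ℝ}
    (hz : ‖z‖ ≤ r) (ht : t ∈ Icc (0:ℝ) T) :
    (![z 0, z 1, t] : Fin 3 → ℝ) ∈ B := by
  rw [hB]
  refine ⟨?_, by simpa using ht.1⟩
  refine norm3_le hδ.le ?_ ?_ ?_
  · exact le_trans (by simpa using norm_le_pi_norm z 0) (hz.trans hr)
  · exact le_trans (by simpa using norm_le_pi_norm z 1) (hz.trans hr)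
  · rw [abs_of_nonneg ht.1]; exact ht.2.trans hT

lemma Gcont {δ : ℝ} (hδ : 0 < δ)
    (η : (Fin 2 → ℝ) → ℝ) (hηc2 : Continuous η)
    (hηsupp : tsupport η ⊆ Metric.ball (0 : Fin 2 → ℝ) 1)
    {B : Set (Fin 3 → ℝ)}
    (hB : B = {y : Fin 3 → ℝ | ‖y‖ ≤ δ ∧ 0 ≤ y 2})
    {m : ℕ} {f : (Fin 3 → ℝ) → ℝ} (hf : ContDiffOn ℝ m f B) (hBu : UniqueDiffOn ℝ B)
    {c T : ℝ} (hc : 1 ≤ c) (hT : 0 < T) (h2c : 2*c⁻¹ ≤ δ) (hTδ : T ≤ δ) :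
    ContinuousOn (fun p : ℝ × (Fin 2 → ℝ) =>
      η (fun i => c * p.2 i)^2 *
        (f ![p.2 0, p.2 1, p.1] - fkBR B m f ![p.2 0, p.2 1, p.1]))
      ((Icc (0:ℝ) T) ×ˢ (univ : Set (Fin 2 → ℝ))) := by
  have hc0 : (0:ℝ) < c := lt_of_lt_of_le one_pos hc
  have hg := g_contOn hδ hB hf hBu
  intro p hp
  rw [mem_prod] at hp
  by_cases hz : ‖p.2‖ < 2*c⁻¹
  · -- near case
    have hsub : ContinuousOn (fun p : ℝ × (Fin 2 → ℝ) =>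
        η (fun i => c * p.2 i)^2 *
          (f ![p.2 0, p.2 1, p.1] - fkBR B m f ![p.2 0, p.2 1, p.1]))
        ((Icc (0:ℝ) T) ×ˢ (Metric.ball (0 : Fin 2 → ℝ) (2*c⁻¹))) := by
      refine ContinuousOn.mul ?_ ?_
      · refine Continuous.continuousOn ?_
        refine (hηc2.comp ?_).pow 2
        refine continuous_pi fun i => continuous_const.mul ((continuous_apply i).comp continuous_snd)
      · have hι : Continuous (fun p : ℝ × (Fin 2 → ℝ) => (![p.2 0, p.2 1, p.1] : Fin 3 → ℝ)) := by
          refine continuous_pi ?_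
          intro i; fin_cases i
          · simpa [Function.comp_def] using (continuous_apply 0).comp continuous_snd
          · simpa [Function.comp_def] using (continuous_apply 1).comp continuous_snd
          · simpa using continuous_fst
        refine hg.comp hι.continuousOn ?_
        intro q hq
        rw [mem_prod] at hq
        have hq2 : ‖q.2‖ ≤ 2*c⁻¹ := by
          have := hq.2
          rw [Metric.mem_ball, dist_zero_right] at this
          exact this.le
        exact tube_mem hδ hB h2c hTδ hq2 hq.1
    have hmem2 : p ∈ (Icc (0:ℝ) T) ×ˢ (Metric.ball (0 : Fin 2 → ℝ) (2*c⁻¹)) := by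
      rw [mem_prod]
      exact ⟨hp.1, by rw [Metric.mem_ball, dist_zero_right]; exact hz⟩
    have hW : ((univ : Set ℝ) ×ˢ Metric.ball (0 : Fin 2 → ℝ) (2*c⁻¹)) ∈ nhds p := by
      refine prod_mem_nhds univ_mem ?_
      exact Metric.isOpen_ball.mem_nhds (by rw [Metric.mem_ball, dist_zero_right]; exact hz)
    refine (continuousWithinAt_inter hW).1 ?_
    have heq : ((Icc (0:ℝ) T) ×ˢ (univ : Set (Fin 2 → ℝ))) ∩
        ((univ : Set ℝ) ×ˢ Metric.ball (0 : Fin 2 → ℝ) (2*c⁻¹))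
        = (Icc (0:ℝ) T) ×ˢ (Metric.ball (0 : Fin 2 → ℝ) (2*c⁻¹)) := by
      rw [prod_inter_prod, inter_univ, univ_inter]
    rw [heq]
    exact hsub p hmem2
  · -- far case : function vanishes in a neighbourhood
    push_neg at hz
    have hcinv : (0:ℝ) < c⁻¹ := by positivity
    have hU : IsOpen {q : ℝ × (Fin 2 → ℝ) | c⁻¹ < ‖q.2‖} :=
      isOpen_lt continuous_const (continuous_norm.comp continuous_snd)
    have hpU : p ∈ {q : ℝ × (Fin 2 → ℝ) | c⁻¹ < ‖q.2‖} := by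
      show c⁻¹ < ‖p.2‖
      calc c⁻¹ < 2*c⁻¹ := by linarith
        _ ≤ ‖p.2‖ := hz
    refine ContinuousWithinAt.congr_of_eventuallyEq
      (continuousWithinAt_const (b := 0)) ?_ ?_
    · filter_upwards [mem_nhdsWithin_of_mem_nhds (hU.mem_nhds hpU)] with q hq
      have : η (fun i => c * q.2 i) = 0 :=
        eta_zero_of_norm_ge η hηsupp hc0 (le_of_lt hq)
      simp [this]
    · have : η (fun i => c * p.2 i) = 0 :=
        eta_zero_of_norm_ge η hηsupp hc0 (le_of_lt hpU)
      simp [this]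

lemma B_compact {δ : ℝ} {B : Set (Fin 3 → ℝ)}
    (hB : B = {y : Fin 3 → ℝ | ‖y‖ ≤ δ ∧ 0 ≤ y 2}) : IsCompact B := by
  rw [hB]
  have h : {y : Fin 3 → ℝ | ‖y‖ ≤ δ ∧ 0 ≤ y 2}
      = Metric.closedBall 0 δ ∩ {y : Fin 3 → ℝ | 0 ≤ y 2} := by
    ext y; simp [Metric.mem_closedBall, dist_zero_right]
  rw [h]
  exact (isCompact_closedBall _ _).inter_right (isClosed_le continuous_const (continuous_apply 2))

lemma infra {δ : ℝ} (hδ : 0 < δ)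
    (η : (Fin 2 → ℝ) → ℝ) (hηc2 : Continuous η)
    (hηsupp : tsupport η ⊆ Metric.ball (0 : Fin 2 → ℝ) 1)
    {B : Set (Fin 3 → ℝ)}
    (hB : B = {y : Fin 3 → ℝ | ‖y‖ ≤ δ ∧ 0 ≤ y 2})
    {m : ℕ} {f : (Fin 3 → ℝ) → ℝ} (hf : ContDiffOn ℝ m f B) (hBu : UniqueDiffOn ℝ B)
    {c T : ℝ} (hc : 1 ≤ c) (hT : 0 < T) (h2c : 2*c⁻¹ ≤ δ) (hTδ : T ≤ δ) (ν : ℝ) :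
    (∀ t ∈ Icc (0:ℝ) T, Integrable (fun z : Fin 2 → ℝ =>
        η (fun i => c * z i)^2 * Real.exp (ν*t) *
          (f ![z 0, z 1, t] - fkBR B m f ![z 0, z 1, t]))) ∧
    IntegrableOn (fun t => ∫ z : Fin 2 → ℝ,
        η (fun i => c * z i)^2 * Real.exp (ν*t) *
          (f ![z 0, z 1, t] - fkBR B m f ![z 0, z 1, t])) (Ioc 0 T) := by
  have hc0 : (0:ℝ) < c := lt_of_lt_of_le one_pos hc
  set G' : ℝ × (Fin 2 → ℝ) → ℝ := fun p =>
      η (fun i => c * p.2 i)^2 *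
        (f ![p.2 0, p.2 1, p.1] - fkBR B m f ![p.2 0, p.2 1, p.1]) with hG'
  have hGc := Gcont hδ η hηc2 hηsupp hB hf hBu hc hT h2c hTδ
  -- slice continuity
  have hslice : ∀ t ∈ Icc (0:ℝ) T, Continuous (fun z => G' (t, z)) := by
    intro t ht
    rw [continuous_iff_continuousAt]
    intro z
    have h1 : ContinuousWithinAt G' ((Icc (0:ℝ) T) ×ˢ (univ : Set (Fin 2 → ℝ))) (t, z) :=
      hGc (t, z) (by rw [mem_prod]; exact ⟨ht, mem_univ z⟩)
    have h2 : ContinuousWithinAt (fun z => G' (t, z)) univ z := by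
      refine h1.comp ?_ ?_
      · exact (Continuous.prodMk_right t).continuousWithinAt
      · intro z' _; rw [mem_prod]; exact ⟨ht, mem_univ z'⟩
    rwa [continuousWithinAt_univ] at h2
  -- compact support of slices
  have hsupp : ∀ t : ℝ, ∀ z : Fin 2 → ℝ, z ∉ Metric.closedBall (0 : Fin 2 → ℝ) c⁻¹ →
      G' (t, z) = 0 := by
    intro t z hz
    rw [Metric.mem_closedBall, dist_zero_right, not_le] at hz
    have : η (fun i => c * z i) = 0 := eta_zero_of_norm_ge η hηsupp hc0 hz.le
    simp [hG', this]
  have hIntz : ∀ t ∈ Icc (0:ℝ) T, Integrable (fun z => G' (t, z)) := by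
    intro t ht
    refine Continuous.integrable_of_hasCompactSupport (hslice t ht) ?_
    exact HasCompactSupport.intro (isCompact_closedBall _ _) (hsupp t)
  have hshape : ∀ t : ℝ, (fun z : Fin 2 → ℝ =>
      η (fun i => c * z i)^2 * Real.exp (ν*t) *
        (f ![z 0, z 1, t] - fkBR B m f ![z 0, z 1, t]))
      = fun z => Real.exp (ν*t) * G' (t, z) := by
    intro t; funext z; simp only [hG']; ring
  constructor
  · intro t ht
    rw [hshape t]
    exact (hIntz t ht).const_mul _
  -- integrability of the t-integral
  -- uniform bound
  obtain ⟨M, hM⟩ := (B_compact hB).exists_bound_of_continuousOn (g_contOn hδ hB hf hBu)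
  have hQi : Integrable (fun z : Fin 2 → ℝ => η (fun i => c * z i)^2) := by
    refine Continuous.integrable_of_hasCompactSupport ((hηc2.comp ?_).pow 2) ?_
    · exact continuous_pi fun i => continuous_const.mul (continuous_apply i)
    · refine HasCompactSupport.intro (isCompact_closedBall (0 : Fin 2 → ℝ) c⁻¹) ?_
      intro z hz
      rw [Metric.mem_closedBall, dist_zero_right, not_le] at hz
      have : η (fun i => c * z i) = 0 := eta_zero_of_norm_ge η hηsupp hc0 hz.le
      simp [this]
  set Q : ℝ := ∫ z : Fin 2 → ℝ, η (fun i => c * z i)^2 with hQ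
  have hMnn : 0 ≤ M := le_trans (norm_nonneg _) (hM _ (by
    rw [hB]; exact ⟨by simpa using hδ.le, by simp⟩ : (0 : Fin 3 → ℝ) ∈ B))
  -- pointwise bound on G'
  have hGbd : ∀ t ∈ Icc (0:ℝ) T, ∀ z : Fin 2 → ℝ,
      |G' (t, z)| ≤ M * η (fun i => c * z i)^2 := by
    intro t ht z
    by_cases hz : ‖z‖ ≤ c⁻¹
    · have hmem : (![z 0, z 1, t] : Fin 3 → ℝ) ∈ B := by
        refine tube_mem hδ hB (le_trans ?_ h2c) hTδ hz ht
        linarith [inv_pos.mpr hc0]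
      have := hM _ hmem
      rw [Real.norm_eq_abs] at this
      calc |G' (t, z)| = η (fun i => c * z i)^2 *
            |f ![z 0, z 1, t] - fkBR B m f ![z 0, z 1, t]| := by
            rw [hG', abs_mul, abs_of_nonneg (sq_nonneg _)]
        _ ≤ η (fun i => c * z i)^2 * M := by
            exact mul_le_mul_of_nonneg_left this (sq_nonneg _)
        _ = M * η (fun i => c * z i)^2 := by ring
    · push_neg at hz
      have : η (fun i => c * z i) = 0 := eta_zero_of_norm_ge η hηsupp hc0 hz.le
      simp [hG', this, hMnn]
  -- measurability of the t-integral
  have hmeas : AEStronglyMeasurable (fun t => ∫ z : Fin 2 → ℝ, G' (t, z))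
      (volume.restrict (Ioc (0:ℝ) T)) := by
    have h1 : ContinuousOn G' ((Ioc (0:ℝ) T) ×ˢ (univ : Set (Fin 2 → ℝ))) :=
      hGc.mono (prod_mono Ioc_subset_Icc_self (subset_refl _))
    have h2 : AEStronglyMeasurable G'
        ((volume.prod volume).restrict ((Ioc (0:ℝ) T) ×ˢ (univ : Set (Fin 2 → ℝ)))) :=
      h1.aestronglyMeasurable (measurableSet_Ioc.prod MeasurableSet.univ)
    rw [← Measure.prod_restrict, Measure.restrict_univ] at h2
    exact h2.integral_prod_right'
  -- conclude
  have hφbd : ∀ t ∈ Ioc (0:ℝ) T, ‖∫ z : Fin 2 → ℝ,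
      η (fun i => c * z i)^2 * Real.exp (ν*t) *
        (f ![z 0, z 1, t] - fkBR B m f ![z 0, z 1, t])‖
      ≤ Real.exp (|ν| * T) * (M * Q) := by
    intro t ht
    have ht' : t ∈ Icc (0:ℝ) T := Ioc_subset_Icc_self ht
    rw [hshape t]
    rw [integral_const_mul]
    rw [Real.norm_eq_abs, abs_mul, abs_of_nonneg (Real.exp_nonneg _)]
    have hexp : Real.exp (ν*t) ≤ Real.exp (|ν| * T) := by
      refine Real.exp_le_exp.2 ?_
      calc ν*t ≤ |ν*t| := le_abs_self _
        _ = |ν| * |t| := abs_mul _ _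
        _ ≤ |ν| * T := by
            refine mul_le_mul_of_nonneg_left ?_ (abs_nonneg ν)
            rw [abs_of_nonneg ht'.1]; exact ht'.2
    have hint : |∫ z : Fin 2 → ℝ, G' (t, z)| ≤ M * Q := by
      calc |∫ z : Fin 2 → ℝ, G' (t, z)| ≤ ∫ z : Fin 2 → ℝ, |G' (t, z)| :=
            by simpa [Real.norm_eq_abs] using
              norm_integral_le_integral_norm (μ := volume) (fun z => G' (t, z))
        _ ≤ ∫ z : Fin 2 → ℝ, M * η (fun i => c * z i)^2 := by
            refine integral_mono ((hIntz t ht').abs) (hQi.const_mul M) ?_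
            intro z; exact hGbd t ht' z
        _ = M * Q := by rw [integral_const_mul]
    exact mul_le_mul hexp hint (abs_nonneg _) (Real.exp_nonneg _)
  refine Integrable.mono' (g := fun _ => Real.exp (|ν| * T) * (M * Q)) ?_ ?_ ?_
  · exact integrableOn_const (by simp [hT])
  · -- AESM of the full function
    have heq : (fun t => ∫ z : Fin 2 → ℝ,
        η (fun i => c * z i)^2 * Real.exp (ν*t) *
          (f ![z 0, z 1, t] - fkBR B m f ![z 0, z 1, t]))
        = fun t => Real.exp (ν*t) * ∫ z : Fin 2 → ℝ, G' (t, z) := by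
      funext t
      rw [hshape t, integral_const_mul]
    rw [heq]
    exact (Real.continuous_exp.comp (continuous_const.mul continuous_id)).aestronglyMeasurable.mul hmeas
  · rw [ae_restrict_iff' measurableSet_Ioc]
    filter_upwards with t
    intro ht
    exact hφbd t ht

lemma tendsto_of_approx {h E : ℕ → ℝ} {κ L : ℝ} (hE : Tendsto E atTop (nhds L))
    (happrox : ∀ ε > 0, ∀ᶠ N in atTop, |h N - κ * E N| ≤ ε * E N) :
    Tendsto h atTop (nhds (κ * L)) := by
  rw [Metric.tendsto_atTop]
  intro ε' hε'
  have hεa : (0:ℝ) < ε' / (2*(|L|+2)) := by positivity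
  have hεb : (0:ℝ) < ε' / (2*(|κ|+1)) := by positivity
  have h1 := happrox _ hεa
  have h2 : ∀ᶠ N in atTop, |E N - L| < min 1 (ε' / (2*(|κ|+1))) := by
    have := Metric.tendsto_nhds.mp hE _ (lt_min one_pos hεb)
    simpa [Real.dist_eq] using this
  obtain ⟨N₁, hN₁⟩ := eventually_atTop.1 h1
  obtain ⟨N₂, hN₂⟩ := eventually_atTop.1 h2
  refine ⟨max N₁ N₂, ?_⟩
  intro N hN
  have e1 := hN₁ N (le_trans (le_max_left _ _) hN)
  have e2 := hN₂ N (le_trans (le_max_right _ _) hN)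
  rw [Real.dist_eq]
  have hEbd : E N ≤ |L| + 2 := by
    have : |E N| ≤ |L| + 1 := by
      have := abs_sub_abs_le_abs_sub (E N) L
      have h3 : |E N - L| ≤ 1 := le_of_lt (lt_of_lt_of_le e2 (min_le_left _ _))
      linarith
    linarith [le_abs_self (E N)]
  have hENnn : 0 ≤ E N := by
    by_contra hneg
    push_neg at hneg
    have := le_trans (abs_nonneg _) e1
    nlinarith
  have key : |h N - κ * L| ≤ |h N - κ * E N| + |κ| * |E N - L| := by
    have : h N - κ * L = (h N - κ * E N) + κ * (E N - L) := by ring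
    rw [this]
    refine (abs_add_le _ _).trans ?_
    rw [abs_mul]
  have t1 : |h N - κ * E N| ≤ ε' / (2*(|L|+2)) * (|L|+2) := by
    refine e1.trans ?_
    exact mul_le_mul_of_nonneg_left hEbd (le_of_lt hεa)
  have t1' : ε' / (2*(|L|+2)) * (|L|+2) = ε'/2 := by field_simp
  have t2 : |κ| * |E N - L| < ε'/2 := by
    have h4 : |E N - L| < ε' / (2*(|κ|+1)) := lt_of_lt_of_le e2 (min_le_right _ _)
    calc |κ| * |E N - L| ≤ (|κ|+1) * |E N - L| := by
          refine mul_le_mul_of_nonneg_right (by linarith [abs_nonneg κ]) (abs_nonneg _)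
      _ < (|κ|+1) * (ε' / (2*(|κ|+1))) := by
          refine mul_lt_mul_of_pos_left h4 (by linarith [abs_nonneg κ])
      _ = ε'/2 := by field_simp
  linarith [key, t1, t1', t2]

lemma eta_sq_integrable (η : (Fin 2 → ℝ) → ℝ) (hηc2 : Continuous η)
    (hηsupp : tsupport η ⊆ Metric.ball (0 : Fin 2 → ℝ) 1)
    {c : ℝ} (hc : 0 < c) :
    Integrable (fun z : Fin 2 → ℝ => η (fun i => c * z i)^2) := by
  refine Continuous.integrable_of_hasCompactSupport ((hηc2.comp ?_).pow 2) ?_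
  · exact continuous_pi fun i => continuous_const.mul (continuous_apply i)
  · refine HasCompactSupport.intro (isCompact_closedBall (0 : Fin 2 → ℝ) c⁻¹) ?_
    intro z hz
    rw [Metric.mem_closedBall, dist_zero_right, not_le] at hz
    by_contra h
    have hmem : (fun i => c * z i) ∈ tsupport η := subset_tsupport η (by
      intro hzero; exact h (by simp [hzero]))
    have hball := hηsupp hmem
    rw [Metric.mem_ball, dist_zero_right] at hball
    have heq : (fun i => c * z i) = c • z := rfl
    rw [heq, norm_smul, Real.norm_eq_abs, abs_of_pos hc] at hball
    have : ‖z‖ < c⁻¹ := by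
      rw [inv_eq_one_div, lt_div_iff₀ hc]; linarith
    linarith











lemma real_side {δ ρ : ℝ} (hδ : 0 < δ) (hρ : 0 < ρ) (hρ1 : ρ < 1)
    (η : (Fin 2 → ℝ) → ℝ) (hηc2 : Continuous η)
    (hηsupp : tsupport η ⊆ Metric.ball (0 : Fin 2 → ℝ) 1)
    (hηint : ∫ z : Fin 2 → ℝ, (η z)^2 = 1)
    {B : Set (Fin 3 → ℝ)}
    (hB : B = {y : Fin 3 → ℝ | ‖y‖ ≤ δ ∧ 0 ≤ y 2})
    {m : ℕ} (hm : 1 ≤ m) {f : (Fin 3 → ℝ) → ℝ} (hf : ContDiffOn ℝ m f B) :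
    Tendsto (fun N : ℕ => (N:ℝ)^((m:ℝ)+3-2*ρ) *
      ∫ t in Ioc (0:ℝ) (1/(2*Real.sqrt N)), ∫ z : Fin 2 → ℝ,
        η (fun i => (N:ℝ)^(1-ρ) * z i)^2 * Real.exp (-2*N*t) *
          (f ![z 0, z 1, t] - fkBR B m f ![z 0, z 1, t]))
      atTop (nhds ((d3BR B)^[m] f 0 / 2^(m+1))) := by
  have hBu : UniqueDiffOn ℝ B := hB ▸ uniqueDiffOn_halfBall hδ
  set cf : ℝ := (d3BR B)^[m] f 0 with hcf
  have hfacpos : (0:ℝ) < m.factorial := by exact_mod_cast m.factorial_pos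
  have key := tendsto_of_approx (h := fun N : ℕ => (N:ℝ)^((m:ℝ)+3-2*ρ) *
      ∫ t in Ioc (0:ℝ) (1/(2*Real.sqrt N)), ∫ z : Fin 2 → ℝ,
        η (fun i => (N:ℝ)^(1-ρ) * z i)^2 * Real.exp (-2*N*t) *
          (f ![z 0, z 1, t] - fkBR B m f ![z 0, z 1, t]))
      (κ := cf / m.factorial) (main_time_limit m) ?_
  · have : cf / m.factorial * ((m.factorial : ℝ) / 2^(m+1)) = cf / 2^(m+1) := by
      field_simp
    rwa [this] at key
  -- the approximation estimate
  intro ε hε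
  obtain ⟨r, hr0, hrδ, hr⟩ := remainder_bound hδ hB hm hf hBu hε
  set s : ℝ := min r δ with hs
  have hs0 : 0 < s := lt_min hr0 hδ
  -- eventual conditions
  have hcT : Tendsto (fun N : ℕ => ((N:ℝ))^(1-ρ)) atTop atTop :=
    (tendsto_rpow_atTop (by linarith)).comp tendsto_natCast_atTop_atTop
  have hev1 : ∀ᶠ N : ℕ in atTop, max 1 (2/s) ≤ ((N:ℝ))^(1-ρ) :=
    hcT.eventually_ge_atTop _
  have hev2 : ∀ᶠ N : ℕ in atTop, max 1 (1/s) ≤ Real.sqrt N :=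
    sqrt_tendsto.eventually_ge_atTop _
  have hev3 : ∀ᶠ N : ℕ in atTop, 1 ≤ N := eventually_ge_atTop 1
  filter_upwards [hev1, hev2, hev3] with N hN1 hN2 hN3
  -- notation
  set c : ℝ := ((N:ℝ))^(1-ρ) with hc
  set T : ℝ := 1/(2*Real.sqrt N) with hT
  have hNpos : (0:ℝ) < N := by exact_mod_cast hN3
  have hc1 : 1 ≤ c := le_trans (le_max_left _ _) hN1
  have hc0 : 0 < c := lt_of_lt_of_le one_pos hc1
  have hsq2 : (0:ℝ) < Real.sqrt N := lt_of_lt_of_le one_pos (le_trans (le_max_left _ _) hN2)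
  have hT0 : 0 < T := by rw [hT]; positivity
  have h2c : 2*c⁻¹ ≤ s := by
    have hge : 2/s ≤ c := le_trans (le_max_right _ _) hN1
    have h2 : 2 ≤ s * c := by
      have := (div_le_iff₀ hs0).1 hge
      linarith
    calc 2*c⁻¹ = 2/c := by rw [div_eq_mul_inv]
      _ ≤ s := by rw [div_le_iff₀ hc0]; linarith
  have hTs : T ≤ s := by
    have hge : 1/s ≤ Real.sqrt N := le_trans (le_max_right _ _) hN2
    rw [hT]
    rw [div_le_iff₀ (by positivity)]
    have h1 : 1/s * s = 1 := by field_simp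
    have : 1 ≤ Real.sqrt N * s := by
      calc (1:ℝ) = 1/s * s := h1.symm
        _ ≤ Real.sqrt N * s := by
            exact mul_le_mul_of_nonneg_right hge hs0.le
    nlinarith [hsq2, hs0]
  have h2cδ : 2*c⁻¹ ≤ δ := h2c.trans (min_le_right _ _)
  have hTδ : T ≤ δ := hTs.trans (min_le_right _ _)
  have h2cr : 2*c⁻¹ ≤ r := h2c.trans (min_le_left _ _)
  have hTr : T ≤ r := hTs.trans (min_le_left _ _)
  obtain ⟨hIntz, hIntφ⟩ := infra hδ η hηc2 hηsupp hB hf hBu hc1 hT0 h2cδ hTδ (-2*(N:ℝ))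
  have hcinv : 0 < c⁻¹ := by positivity
  -- pointwise bound
  set Q : ℝ := (c^2)⁻¹ with hQ
  have hQeq : ∫ z : Fin 2 → ℝ, η (fun i => c * z i)^2 = Q := by
    rw [eta_scale η hc0.le, hηint, mul_one]
  have hQnn : 0 ≤ Q := by positivity
  have hQi := eta_sq_integrable η hηc2 hηsupp hc0
  set κ : ℝ := cf / m.factorial with hκ
  -- inner bound for each t
  have hinner : ∀ t ∈ Ioc (0:ℝ) T,
      |(∫ z : Fin 2 → ℝ, η (fun i => c * z i)^2 * Real.exp (-2*(N:ℝ)*t) *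
          (f ![z 0, z 1, t] - fkBR B m f ![z 0, z 1, t]))
        - κ * Q * (t^m * Real.exp (-2*(N:ℝ)*t))|
      ≤ ε * Q * (t^m * Real.exp (-2*(N:ℝ)*t)) := by
    intro t ht
    have ht' : t ∈ Icc (0:ℝ) T := Ioc_subset_Icc_self ht
    set e : ℝ := Real.exp (-2*(N:ℝ)*t) with he
    have he0 : 0 < e := Real.exp_pos _
    -- pointwise
    have hpt : ∀ z : Fin 2 → ℝ,
        |η (fun i => c * z i)^2 * e * (f ![z 0, z 1, t] - fkBR B m f ![z 0, z 1, t])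
          - (κ * e * t^m) * η (fun i => c * z i)^2|
        ≤ (ε * e * t^m) * η (fun i => c * z i)^2 := by
      intro z
      by_cases hzz : c⁻¹ ≤ ‖z‖
      · rw [eta_zero_of_norm_ge η hηsupp hc0 hzz]
        simp
      · push_neg at hzz
        have hnorm : ‖(![z 0, z 1, t] : Fin 3 → ℝ)‖ ≤ r := by
          refine norm3_le hr0.le ?_ ?_ ?_
          · refine le_trans (by simpa using norm_le_pi_norm z 0) (le_trans hzz.le ?_)
            linarith
          · refine le_trans (by simpa using norm_le_pi_norm z 1) (le_trans hzz.le ?_)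
            linarith
          · rw [abs_of_nonneg ht'.1]; exact ht'.2.trans hTr
        have hRb := hr z t ht'.1 hnorm
        have hw : (0:ℝ) ≤ η (fun i => c * z i)^2 * e :=
          mul_nonneg (sq_nonneg _) he0.le
        have : η (fun i => c * z i)^2 * e * (f ![z 0, z 1, t] - fkBR B m f ![z 0, z 1, t])
            - (κ * e * t^m) * η (fun i => c * z i)^2
            = (η (fun i => c * z i)^2 * e) *
              ((f ![z 0, z 1, t] - fkBR B m f ![z 0, z 1, t]) - cf * t^m / m.factorial) := by
          rw [hκ]; field_simp
        rw [this, abs_mul, abs_of_nonneg hw]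
        calc (η (fun i => c * z i)^2 * e) *
              |(f ![z 0, z 1, t] - fkBR B m f ![z 0, z 1, t]) - cf * t^m / m.factorial|
            ≤ (η (fun i => c * z i)^2 * e) * (ε * t^m) :=
              mul_le_mul_of_nonneg_left hRb hw
          _ = (ε * e * t^m) * η (fun i => c * z i)^2 := by ring
    -- integrate
    have hu := hIntz t ht'
    have hveq : ∫ z : Fin 2 → ℝ, (κ * e * t^m) * η (fun i => c * z i)^2
        = κ * Q * (t^m * e) := by
      rw [integral_const_mul, hQeq]; ring
    have hsub : (∫ z : Fin 2 → ℝ, η (fun i => c * z i)^2 * e *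
          (f ![z 0, z 1, t] - fkBR B m f ![z 0, z 1, t])) - κ * Q * (t^m * e)
        = ∫ z : Fin 2 → ℝ,
            (η (fun i => c * z i)^2 * e * (f ![z 0, z 1, t] - fkBR B m f ![z 0, z 1, t])
              - (κ * e * t^m) * η (fun i => c * z i)^2) := by
      rw [integral_sub hu (hQi.const_mul _), hveq]
    rw [hsub]
    calc |∫ z : Fin 2 → ℝ,
            (η (fun i => c * z i)^2 * e * (f ![z 0, z 1, t] - fkBR B m f ![z 0, z 1, t])
              - (κ * e * t^m) * η (fun i => c * z i)^2)|
        ≤ ∫ z : Fin 2 → ℝ,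
            |η (fun i => c * z i)^2 * e * (f ![z 0, z 1, t] - fkBR B m f ![z 0, z 1, t])
              - (κ * e * t^m) * η (fun i => c * z i)^2| := by
          simpa [Real.norm_eq_abs] using norm_integral_le_integral_norm (μ := volume)
            (fun z : Fin 2 → ℝ =>
              η (fun i => c * z i)^2 * e * (f ![z 0, z 1, t] - fkBR B m f ![z 0, z 1, t])
                - (κ * e * t^m) * η (fun i => c * z i)^2)
      _ ≤ ∫ z : Fin 2 → ℝ, (ε * e * t^m) * η (fun i => c * z i)^2 := by
          refine integral_mono ((hu.sub (hQi.const_mul _)).abs) (hQi.const_mul _) hpt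
      _ = ε * Q * (t^m * e) := by rw [integral_const_mul, hQeq]; ring
  -- outer integration
  set φ : ℝ → ℝ := fun t => ∫ z : Fin 2 → ℝ,
      η (fun i => c * z i)^2 * Real.exp (-2*(N:ℝ)*t) *
        (f ![z 0, z 1, t] - fkBR B m f ![z 0, z 1, t]) with hφ
  set J : ℝ := ∫ t in Ioc (0:ℝ) T, t^m * Real.exp (-2*(N:ℝ)*t) with hJ
  have hJi : IntegrableOn (fun t => t^m * Real.exp (-2*(N:ℝ)*t)) (Ioc 0 T) := by
    refine Continuous.integrableOn_Ioc ?_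
    exact (continuous_pow m).mul (Real.continuous_exp.comp (continuous_const.mul continuous_id))
  have hJnn : 0 ≤ J := by
    rw [hJ]
    refine setIntegral_nonneg measurableSet_Ioc ?_
    intro t ht
    exact mul_nonneg (pow_nonneg (le_of_lt ht.1) m) (Real.exp_nonneg _)
  have houter : |(∫ t in Ioc (0:ℝ) T, φ t) - κ * Q * J| ≤ ε * Q * J := by
    have h1 : (∫ t in Ioc (0:ℝ) T, φ t) - κ * Q * J
        = ∫ t in Ioc (0:ℝ) T, (φ t - κ * Q * (t^m * Real.exp (-2*(N:ℝ)*t))) := by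
      rw [integral_sub hIntφ (hJi.const_mul _)]
      rw [hJ, integral_const_mul]
    rw [h1]
    calc |∫ t in Ioc (0:ℝ) T, (φ t - κ * Q * (t^m * Real.exp (-2*(N:ℝ)*t)))|
        ≤ ∫ t in Ioc (0:ℝ) T, |φ t - κ * Q * (t^m * Real.exp (-2*(N:ℝ)*t))| := by
          simpa [Real.norm_eq_abs] using norm_integral_le_integral_norm
            (μ := volume.restrict (Ioc (0:ℝ) T))
            (fun t => φ t - κ * Q * (t^m * Real.exp (-2*(N:ℝ)*t)))
      _ ≤ ∫ t in Ioc (0:ℝ) T, ε * Q * (t^m * Real.exp (-2*(N:ℝ)*t)) := by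
          refine setIntegral_mono_on ((hIntφ.sub (hJi.const_mul _)).abs) (hJi.const_mul _)
            measurableSet_Ioc ?_
          intro t ht
          exact hinner t ht
      _ = ε * Q * J := by rw [hJ, integral_const_mul]
  -- multiply by the prefactor
  set P : ℝ := (N:ℝ)^((m:ℝ)+3-2*ρ) with hP
  have hPnn : 0 ≤ P := Real.rpow_nonneg hNpos.le _
  have hPQ : P * Q = (N:ℝ)^(m+1) := by
    rw [hP, hQ, hc]
    rw [← Real.rpow_natCast ((N:ℝ)^(1-ρ)) 2, ← Real.rpow_mul hNpos.le]
    rw [← Real.rpow_neg hNpos.le]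
    rw [← Real.rpow_add hNpos]
    rw [← Real.rpow_natCast (N:ℝ) (m+1)]
    congr 1
    push_cast
    ring
  have hgoal : |P * (∫ t in Ioc (0:ℝ) T, φ t) - cf / (m.factorial:ℝ) * ((N:ℝ)^(m+1) * J)|
      ≤ ε * ((N:ℝ)^(m+1) * J) := by
    have h2 : P * (∫ t in Ioc (0:ℝ) T, φ t) - cf / (m.factorial:ℝ) * ((N:ℝ)^(m+1) * J)
        = P * ((∫ t in Ioc (0:ℝ) T, φ t) - κ * Q * J) := by
      rw [← hPQ, hκ]; ring
    rw [h2, abs_mul, abs_of_nonneg hPnn]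
    calc P * |(∫ t in Ioc (0:ℝ) T, φ t) - κ * Q * J|
        ≤ P * (ε * Q * J) := mul_le_mul_of_nonneg_left houter hPnn
      _ = ε * ((N:ℝ)^(m+1) * J) := by rw [← hPQ]; ring
  -- match shapes
  have hshape : (∫ t in Ioc (0:ℝ) (1/(2*Real.sqrt N)), ∫ z : Fin 2 → ℝ,
      η (fun i => (N:ℝ)^(1-ρ) * z i)^2 * Real.exp (-2*N*t) *
        (f ![z 0, z 1, t] - fkBR B m f ![z 0, z 1, t])) = ∫ t in Ioc (0:ℝ) T, φ t := rfl
  rw [hshape]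
  exact hgoal

end AuxProofs

/-- The boundary determination limit for the Lamé moduli: with
`D = (i(ω₁a₁+ω₂a₂) − a₃)²` and
`B = Σ_{i,j=1}² ((a_iω_j+a_jω_i)/2)² + 2Σ_{i=1}² ((ia₃ω_i−a_i)/2)² + a₃²`,
`N^{m+3−2ρ} ∫₀^{1/(2√N)} ∫_{ℝ²} η² e^{−2Ny₃} [(λ−λ^m)D + 2(μ−μ^m)B] dy'dy₃`
converges, as `N → ∞`, to `(1/2^{m+1}) ∂₃^m λ(0) D + (1/2^m) ∂₃^m μ(0) B`. -/
theorem stmt18 (m : ℕ) (hm : 1 ≤ m) (ρ : ℝ) (hρ : 0 < ρ) (hρ1 : ρ < 1)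
    (η : (Fin 2 → ℝ) → ℝ) (hη : ContDiff ℝ (⊤ : ℕ∞) η) (hηc : HasCompactSupport η)
    (hηsupp : tsupport η ⊆ Metric.ball (0 : Fin 2 → ℝ) 1)
    (hηint : ∫ z : Fin 2 → ℝ, (η z) ^ 2 = 1)
    (ω1 ω2 : ℝ) (hω : ω1 ^ 2 + ω2 ^ 2 = 1) (a : Fin 3 → ℂ)
    (δ : ℝ) (hδ : 0 < δ) (B : Set (Fin 3 → ℝ))
    (hB : B = {y : Fin 3 → ℝ | ‖y‖ ≤ δ ∧ 0 ≤ y 2})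
    (lam mu : (Fin 3 → ℝ) → ℝ)
    (hlam : ContDiffOn ℝ m lam B) (hmu : ContDiffOn ℝ m mu B)
    (D Bq : ℂ)
    (hD : D = (Complex.I * ((ω1 : ℂ) * a 0 + (ω2 : ℂ) * a 1) - a 2) ^ 2)
    (hBq : Bq =
      (∑ i : Fin 2, ∑ j : Fin 2,
          ((a i.castSucc * (![(ω1 : ℂ), (ω2 : ℂ)] : Fin 2 → ℂ) j
              + a j.castSucc * (![(ω1 : ℂ), (ω2 : ℂ)] : Fin 2 → ℂ) i) / 2) ^ 2)
        + 2 * (∑ i : Fin 2,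
            ((Complex.I * a 2 * (![(ω1 : ℂ), (ω2 : ℂ)] : Fin 2 → ℂ) i
              - a i.castSucc) / 2) ^ 2)
        + (a 2) ^ 2) :
    Filter.Tendsto
      (fun N : ℕ =>
        ((N : ℝ) ^ ((m : ℝ) + 3 - 2 * ρ)) •
          ∫ t in Set.Ioc (0 : ℝ) (1 / (2 * Real.sqrt N)),
            ∫ z : Fin 2 → ℝ,
              (((η (fun i => (N : ℝ) ^ (1 - ρ) * z i)) ^ 2 * Real.exp (-2 * N * t) : ℝ) : ℂ) *
                (((lam ![z 0, z 1, t] - fkBR B m lam ![z 0, z 1, t] : ℝ) : ℂ) * D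
                  + 2 * ((mu ![z 0, z 1, t] - fkBR B m mu ![z 0, z 1, t] : ℝ) : ℂ) * Bq))
      Filter.atTop
      (nhds (((1 / 2 ^ (m + 1) : ℝ) : ℂ) * (((d3BR B)^[m] lam 0 : ℝ) : ℂ) * D
        + ((1 / 2 ^ m : ℝ) : ℂ) * (((d3BR B)^[m] mu 0 : ℝ) : ℂ) * Bq)) := by
  have hηc2 : Continuous η := hη.continuous
  have hBu : UniqueDiffOn ℝ B := hB ▸ uniqueDiffOn_halfBall hδ
  have hlimL := real_side hδ hρ hρ1 η hηc2 hηsupp hηint hB hm hlam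
  have hlimM := real_side hδ hρ hρ1 η hηc2 hηsupp hηint hB hm hmu
  set cL : ℝ := (d3BR B)^[m] lam 0 with hcL
  set cM : ℝ := (d3BR B)^[m] mu 0 with hcM
  -- combined limit
  have hC : Tendsto (fun N : ℕ =>
      (((N:ℝ)^((m:ℝ)+3-2*ρ) *
        ∫ t in Ioc (0:ℝ) (1/(2*Real.sqrt N)), ∫ z : Fin 2 → ℝ,
          η (fun i => (N:ℝ)^(1-ρ) * z i)^2 * Real.exp (-2*N*t) *
            (lam ![z 0, z 1, t] - fkBR B m lam ![z 0, z 1, t]) : ℝ) : ℂ) * D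
      + 2 * (((N:ℝ)^((m:ℝ)+3-2*ρ) *
        ∫ t in Ioc (0:ℝ) (1/(2*Real.sqrt N)), ∫ z : Fin 2 → ℝ,
          η (fun i => (N:ℝ)^(1-ρ) * z i)^2 * Real.exp (-2*N*t) *
            (mu ![z 0, z 1, t] - fkBR B m mu ![z 0, z 1, t]) : ℝ) : ℂ) * Bq)
      atTop (nhds (((cL / 2^(m+1) : ℝ) : ℂ) * D + 2 * ((cM / 2^(m+1) : ℝ) : ℂ) * Bq)) := by
    have h1 : Tendsto (fun N : ℕ => (((N:ℝ)^((m:ℝ)+3-2*ρ) *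
        ∫ t in Ioc (0:ℝ) (1/(2*Real.sqrt N)), ∫ z : Fin 2 → ℝ,
          η (fun i => (N:ℝ)^(1-ρ) * z i)^2 * Real.exp (-2*N*t) *
            (lam ![z 0, z 1, t] - fkBR B m lam ![z 0, z 1, t]) : ℝ) : ℂ))
        atTop (nhds ((cL / 2^(m+1) : ℝ) : ℂ)) :=
      (Complex.continuous_ofReal.tendsto _).comp hlimL
    have h2 : Tendsto (fun N : ℕ => (((N:ℝ)^((m:ℝ)+3-2*ρ) *
        ∫ t in Ioc (0:ℝ) (1/(2*Real.sqrt N)), ∫ z : Fin 2 → ℝ,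
          η (fun i => (N:ℝ)^(1-ρ) * z i)^2 * Real.exp (-2*N*t) *
            (mu ![z 0, z 1, t] - fkBR B m mu ![z 0, z 1, t]) : ℝ) : ℂ))
        atTop (nhds ((cM / 2^(m+1) : ℝ) : ℂ)) :=
      (Complex.continuous_ofReal.tendsto _).comp hlimM
    exact (h1.mul_const D).add ((h2.const_mul 2).mul_const Bq)
  have htarget : (((cL / 2^(m+1) : ℝ) : ℂ) * D + 2 * ((cM / 2^(m+1) : ℝ) : ℂ) * Bq)
      = (((1 / 2 ^ (m + 1) : ℝ) : ℂ) * ((cL : ℝ) : ℂ) * D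
        + ((1 / 2 ^ m : ℝ) : ℂ) * ((cM : ℝ) : ℂ) * Bq) := by
    push_cast
    have h2m : ((2:ℂ))^(m+1) ≠ 0 := pow_ne_zero _ two_ne_zero
    have h2m' : ((2:ℂ))^m ≠ 0 := pow_ne_zero _ two_ne_zero
    field_simp
    ring
  rw [← htarget]
  refine Tendsto.congr' ?_ hC
  -- eventual equality
  have hcT : Tendsto (fun N : ℕ => ((N:ℝ))^(1-ρ)) atTop atTop :=
    (tendsto_rpow_atTop (by linarith)).comp tendsto_natCast_atTop_atTop
  have hev1 : ∀ᶠ N : ℕ in atTop, max 1 (2/δ) ≤ ((N:ℝ))^(1-ρ) :=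
    hcT.eventually_ge_atTop _
  have hev2 : ∀ᶠ N : ℕ in atTop, max 1 (1/δ) ≤ Real.sqrt N :=
    sqrt_tendsto.eventually_ge_atTop _
  filter_upwards [hev1, hev2] with N hN1 hN2
  set c : ℝ := ((N:ℝ))^(1-ρ) with hc
  set T : ℝ := 1/(2*Real.sqrt N) with hT
  have hc1 : 1 ≤ c := le_trans (le_max_left _ _) hN1
  have hc0 : 0 < c := lt_of_lt_of_le one_pos hc1
  have hsq2 : (0:ℝ) < Real.sqrt N := lt_of_lt_of_le one_pos (le_trans (le_max_left _ _) hN2)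
  have hT0 : 0 < T := by rw [hT]; positivity
  have h2c : 2*c⁻¹ ≤ δ := by
    have hge : 2/δ ≤ c := le_trans (le_max_right _ _) hN1
    have h2 : 2 ≤ δ * c := by
      have := (div_le_iff₀ hδ).1 hge
      linarith
    calc 2*c⁻¹ = 2/c := by rw [div_eq_mul_inv]
      _ ≤ δ := by rw [div_le_iff₀ hc0]; linarith
  have hTδ : T ≤ δ := by
    have hge : 1/δ ≤ Real.sqrt N := le_trans (le_max_right _ _) hN2
    rw [hT, div_le_iff₀ (by positivity)]
    have h1 : 1/δ * δ = 1 := by field_simp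
    have : 1 ≤ Real.sqrt N * δ := by
      calc (1:ℝ) = 1/δ * δ := h1.symm
        _ ≤ Real.sqrt N * δ := mul_le_mul_of_nonneg_right hge hδ.le
    nlinarith [hsq2, hδ]
  obtain ⟨hIL, hphiL⟩ := infra hδ η hηc2 hηsupp hB hlam hBu hc1 hT0 h2c hTδ (-2*(N:ℝ))
  obtain ⟨hIM, hphiM⟩ := infra hδ η hηc2 hηsupp hB hmu hBu hc1 hT0 h2c hTδ (-2*(N:ℝ))
  -- step 1 : rewrite the inner integral for each t
  have hstep1 : ∀ t ∈ Ioc (0:ℝ) T,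
      (∫ z : Fin 2 → ℝ,
        (((η (fun i => c * z i)) ^ 2 * Real.exp (-2 * N * t) : ℝ) : ℂ) *
          (((lam ![z 0, z 1, t] - fkBR B m lam ![z 0, z 1, t] : ℝ) : ℂ) * D
            + 2 * ((mu ![z 0, z 1, t] - fkBR B m mu ![z 0, z 1, t] : ℝ) : ℂ) * Bq))
      = ((∫ z : Fin 2 → ℝ, η (fun i => c * z i)^2 * Real.exp (-2*N*t) *
          (lam ![z 0, z 1, t] - fkBR B m lam ![z 0, z 1, t]) : ℝ) : ℂ) * D
        + 2 * ((∫ z : Fin 2 → ℝ, η (fun i => c * z i)^2 * Real.exp (-2*N*t) *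
          (mu ![z 0, z 1, t] - fkBR B m mu ![z 0, z 1, t]) : ℝ) : ℂ) * Bq := by
    intro t ht
    have ht' : t ∈ Icc (0:ℝ) T := Ioc_subset_Icc_self ht
    have hintL := hIL t ht'
    have hintM := hIM t ht'
    have hpt : (fun z : Fin 2 → ℝ =>
        (((η (fun i => c * z i)) ^ 2 * Real.exp (-2 * N * t) : ℝ) : ℂ) *
          (((lam ![z 0, z 1, t] - fkBR B m lam ![z 0, z 1, t] : ℝ) : ℂ) * D
            + 2 * ((mu ![z 0, z 1, t] - fkBR B m mu ![z 0, z 1, t] : ℝ) : ℂ) * Bq))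
        = fun z : Fin 2 → ℝ =>
          ((η (fun i => c * z i)^2 * Real.exp (-2*N*t) *
            (lam ![z 0, z 1, t] - fkBR B m lam ![z 0, z 1, t]) : ℝ) : ℂ) * D
          + ((η (fun i => c * z i)^2 * Real.exp (-2*N*t) *
            (mu ![z 0, z 1, t] - fkBR B m mu ![z 0, z 1, t]) : ℝ) : ℂ) * (2 * Bq) := by
      funext z
      push_cast
      ring
    rw [hpt]
    have h1 : Integrable (fun z : Fin 2 → ℝ =>
        ((η (fun i => c * z i)^2 * Real.exp (-2*N*t) *
          (lam ![z 0, z 1, t] - fkBR B m lam ![z 0, z 1, t]) : ℝ) : ℂ) * D) :=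
      (hintL.ofReal.mul_const D)
    have h2 : Integrable (fun z : Fin 2 → ℝ =>
        ((η (fun i => c * z i)^2 * Real.exp (-2*N*t) *
          (mu ![z 0, z 1, t] - fkBR B m mu ![z 0, z 1, t]) : ℝ) : ℂ) * (2*Bq)) :=
      (hintM.ofReal.mul_const _)
    rw [integral_add h1 h2]
    rw [integral_mul_const, integral_mul_const]
    have h3 : ∫ z : Fin 2 → ℝ, ((η (fun i => c * z i)^2 * Real.exp (-2*N*t) *
          (lam ![z 0, z 1, t] - fkBR B m lam ![z 0, z 1, t]) : ℝ) : ℂ)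
        = ((∫ z : Fin 2 → ℝ, η (fun i => c * z i)^2 * Real.exp (-2*N*t) *
          (lam ![z 0, z 1, t] - fkBR B m lam ![z 0, z 1, t]) : ℝ) : ℂ) := integral_ofReal
    have h4 : ∫ z : Fin 2 → ℝ, ((η (fun i => c * z i)^2 * Real.exp (-2*N*t) *
          (mu ![z 0, z 1, t] - fkBR B m mu ![z 0, z 1, t]) : ℝ) : ℂ)
        = ((∫ z : Fin 2 → ℝ, η (fun i => c * z i)^2 * Real.exp (-2*N*t) *
          (mu ![z 0, z 1, t] - fkBR B m mu ![z 0, z 1, t]) : ℝ) : ℂ) := integral_ofReal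
    rw [h3, h4]
    ring
  -- step 2 : outer integral
  have hstep2 : (∫ t in Ioc (0:ℝ) T, ∫ z : Fin 2 → ℝ,
      (((η (fun i => c * z i)) ^ 2 * Real.exp (-2 * N * t) : ℝ) : ℂ) *
        (((lam ![z 0, z 1, t] - fkBR B m lam ![z 0, z 1, t] : ℝ) : ℂ) * D
          + 2 * ((mu ![z 0, z 1, t] - fkBR B m mu ![z 0, z 1, t] : ℝ) : ℂ) * Bq))
      = ((∫ t in Ioc (0:ℝ) T, ∫ z : Fin 2 → ℝ, η (fun i => c * z i)^2 * Real.exp (-2*N*t) *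
          (lam ![z 0, z 1, t] - fkBR B m lam ![z 0, z 1, t]) : ℝ) : ℂ) * D
        + 2 * ((∫ t in Ioc (0:ℝ) T, ∫ z : Fin 2 → ℝ, η (fun i => c * z i)^2 * Real.exp (-2*N*t) *
          (mu ![z 0, z 1, t] - fkBR B m mu ![z 0, z 1, t]) : ℝ) : ℂ) * Bq := by
    rw [setIntegral_congr_fun measurableSet_Ioc hstep1]
    have h1 : (fun t => ((∫ z : Fin 2 → ℝ, η (fun i => c * z i)^2 * Real.exp (-2*N*t) *
        (lam ![z 0, z 1, t] - fkBR B m lam ![z 0, z 1, t]) : ℝ) : ℂ) * D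
        + 2 * ((∫ z : Fin 2 → ℝ, η (fun i => c * z i)^2 * Real.exp (-2*N*t) *
        (mu ![z 0, z 1, t] - fkBR B m mu ![z 0, z 1, t]) : ℝ) : ℂ) * Bq)
        = fun t => ((∫ z : Fin 2 → ℝ, η (fun i => c * z i)^2 * Real.exp (-2*N*t) *
        (lam ![z 0, z 1, t] - fkBR B m lam ![z 0, z 1, t]) : ℝ) : ℂ) * D
        + ((∫ z : Fin 2 → ℝ, η (fun i => c * z i)^2 * Real.exp (-2*N*t) *
        (mu ![z 0, z 1, t] - fkBR B m mu ![z 0, z 1, t]) : ℝ) : ℂ) * (2 * Bq) := by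
      funext t; ring
    rw [h1]
    have h5 : Integrable (fun t =>
        ((∫ z : Fin 2 → ℝ, η (fun i => c * z i)^2 * Real.exp (-2*N*t) *
          (lam ![z 0, z 1, t] - fkBR B m lam ![z 0, z 1, t]) : ℝ) : ℂ) * D)
        (volume.restrict (Ioc (0:ℝ) T)) :=
      (hphiL.ofReal.mul_const D)
    have h6 : Integrable (fun t =>
        ((∫ z : Fin 2 → ℝ, η (fun i => c * z i)^2 * Real.exp (-2*N*t) *
          (mu ![z 0, z 1, t] - fkBR B m mu ![z 0, z 1, t]) : ℝ) : ℂ) * (2*Bq))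
        (volume.restrict (Ioc (0:ℝ) T)) :=
      (hphiM.ofReal.mul_const _)
    rw [integral_add h5 h6]
    rw [integral_mul_const, integral_mul_const]
    have h7 : ∫ t in Ioc (0:ℝ) T, ((∫ z : Fin 2 → ℝ, η (fun i => c * z i)^2 * Real.exp (-2*N*t) *
          (lam ![z 0, z 1, t] - fkBR B m lam ![z 0, z 1, t]) : ℝ) : ℂ)
        = ((∫ t in Ioc (0:ℝ) T, ∫ z : Fin 2 → ℝ, η (fun i => c * z i)^2 * Real.exp (-2*N*t) *
          (lam ![z 0, z 1, t] - fkBR B m lam ![z 0, z 1, t]) : ℝ) : ℂ) := integral_ofReal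
    have h8 : ∫ t in Ioc (0:ℝ) T, ((∫ z : Fin 2 → ℝ, η (fun i => c * z i)^2 * Real.exp (-2*N*t) *
          (mu ![z 0, z 1, t] - fkBR B m mu ![z 0, z 1, t]) : ℝ) : ℂ)
        = ((∫ t in Ioc (0:ℝ) T, ∫ z : Fin 2 → ℝ, η (fun i => c * z i)^2 * Real.exp (-2*N*t) *
          (mu ![z 0, z 1, t] - fkBR B m mu ![z 0, z 1, t]) : ℝ) : ℂ) := integral_ofReal
    rw [h7, h8]
    ring
  rw [hstep2, Complex.real_smul]
  push_cast
  ring
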